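/- For odd n ≥ 3, the commutator subgroup of the group 𝒜 = {((x₁,0,…,0), diag(λ, A)) : x₁ ∈ ℝ, λ ≠ 0, A ∈ GL(n-1,ℝ), λ·det(A) ≠ 0} ⊆ ℝ^n ⋊ GL(n,ℝ) equals 𝒟 = {((x₁,0,…,0), diag(1, D)) : x₁ ∈ ℝ, D ∈ SL(n-1,ℝ)}. -/

import Mathlib

open Matrix

noncomputable def glAut (n : ℕ) : GL (Fin n) ℝ →* MulAut (Multiplicative (Fin n → ℝ)) where
  toFun A :=
    { toFun := fun x => Multiplicative.ofAdd (A.val *ᵥ x.toAdd)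
      invFun := fun x => Multiplicative.ofAdd ((A⁻¹).val *ᵥ x.toAdd)
      left_inv := fun x => by
        have h : (A.val)⁻¹ * A.val = 1 := by
          rw [← Matrix.coe_units_inv, ← Units.val_mul, inv_mul_cancel, Units.val_one]
        simp [Matrix.mulVec_mulVec, h]
      right_inv := fun x => by
        have h : A.val * (A.val)⁻¹ = 1 := by
          rw [← Matrix.coe_units_inv, ← Units.val_mul, mul_inv_cancel, Units.val_one]
        simp [Matrix.mulVec_mulVec, h]
      map_mul' := fun x y => by
        simp [Matrix.mulVec_add, ofAdd_add] }
  map_one' := by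
    ext x
    simp
  map_mul' := fun A B => by
    ext x
    simp [Matrix.mulVec_mulVec]

abbrev AffGL (n : ℕ) := SemidirectProduct (Multiplicative (Fin n → ℝ)) (GL (Fin n) ℝ) (glAut n)

/-- The set 𝒜 = {((x₁,0,…,0), diag(l, A)) : x₁ ∈ ℝ, l ≠ 0, A ∈ GL(n-1,ℝ)} (so that
l · det A ≠ 0) inside ℝⁿ ⋊ GL(n,ℝ). -/
def setA (n : ℕ) (h : 1 + (n - 1) = n) : Set (AffGL n) :=
  {p : AffGL n | ∃ (x₁ l : ℝ) (A : Matrix (Fin (n - 1)) (Fin (n - 1)) ℝ),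
    l ≠ 0 ∧ IsUnit A ∧
    p.left = Multiplicative.ofAdd (fun i : Fin n => if (i : ℕ) = 0 then x₁ else 0) ∧
    (p.right : Matrix (Fin n) (Fin n) ℝ) =
      Matrix.reindex (finSumFinEquiv.trans (finCongr h)) (finSumFinEquiv.trans (finCongr h))
        (Matrix.fromBlocks (Matrix.diagonal fun _ : Fin 1 => l) 0 0 A)}

/-- The set 𝒟 = {((x₁,0,…,0), diag(1, D)) : x₁ ∈ ℝ, D ∈ SL(n-1,ℝ)}. -/
def setD (n : ℕ) (h : 1 + (n - 1) = n) : Set (AffGL n) :=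
  {p : AffGL n | ∃ (x₁ : ℝ) (D : Matrix (Fin (n - 1)) (Fin (n - 1)) ℝ),
    D.det = 1 ∧
    p.left = Multiplicative.ofAdd (fun i : Fin n => if (i : ℕ) = 0 then x₁ else 0) ∧
    (p.right : Matrix (Fin n) (Fin n) ℝ) =
      Matrix.reindex (finSumFinEquiv.trans (finCongr h)) (finSumFinEquiv.trans (finCongr h))
        (Matrix.fromBlocks 1 0 0 D)}



set_option maxRecDepth 8000

open scoped commutatorElement

theorem PEquiv.equiv_toPEquiv_toMatrix {n : Type*} [DecidableEq n] (σ : Equiv n n) (i j : n) :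
    σ.toPEquiv.toMatrix i j = (1 : Matrix n n ℝ) (σ i) j := by
  rw [PEquiv.toMatrix_toPEquiv_apply, Pi.single_apply, Matrix.one_apply]
  simp only [eq_comm]

variable {m : ℕ}

lemma my_diag_mul_transvec (i j : Fin m) (hij : i ≠ j) (c : ℝ) :
    diagonal (fun k => if k = i then (2:ℝ) else 1) * transvection i j c
      = transvection i j c * transvection i j c
        * diagonal (fun k => if k = i then (2:ℝ) else 1) := by
  rw [transvection_mul_transvection_same i j hij c c]
  ext a b
  rw [diagonal_mul, mul_diagonal]
  simp only [transvection, Matrix.add_apply, Matrix.one_apply, Matrix.smul_apply,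
    Matrix.single, smul_eq_mul, Matrix.of_apply]
  split_ifs
  all_goals try ring
  all_goals exfalso
  all_goals try casesm* _ ∧ _
  all_goals subst_vars
  all_goals simp_all

lemma prod_ite_two (i : Fin m) : (∏ k : Fin m, if k = i then (2:ℝ) else 1) = 2 := by
  simp [Finset.prod_ite_eq']

lemma transvec_mem_comm (t : TransvectionStruct (Fin m) ℝ) (T : GL (Fin m) ℝ)
    (hT : T.val = t.toMatrix) :
    T ∈ ⁅(⊤ : Subgroup (GL (Fin m) ℝ)), (⊤ : Subgroup (GL (Fin m) ℝ))⁆ := by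
  have hd : IsUnit (diagonal (fun k => if k = t.i then (2:ℝ) else 1)) := by
    rw [Matrix.isUnit_iff_isUnit_det, det_diagonal, prod_ite_two]
    exact isUnit_iff_ne_zero.2 (by norm_num)
  set D : GL (Fin m) ℝ := hd.unit with hD
  have hcomm : D * T = T * T * D := by
    apply Units.ext
    simp only [Units.val_mul, hD, IsUnit.unit_spec, hT]
    rw [TransvectionStruct.toMatrix, my_diag_mul_transvec t.i t.j t.hij t.c]
  have hkey : ⁅D, T⁆ = T := by
    rw [commutatorElement_def, hcomm]
    group
  exact hkey ▸ Subgroup.commutator_mem_commutator (Subgroup.mem_top D) (Subgroup.mem_top T)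

lemma my_diag_mul_perm (i j : Fin m) (hij : i ≠ j) (a : ℝ) (ha : a ≠ 0) :
    diagonal (fun k => if k = i then a else 1) * (Equiv.swap i j).permMatrix ℝ
      = diagonal (fun k => if k = i then a else if k = j then a⁻¹ else 1)
        * (Equiv.swap i j).permMatrix ℝ
        * diagonal (fun k => if k = i then a else 1) := by
  ext p q
  rw [Matrix.mul_diagonal, Matrix.diagonal_mul, Matrix.diagonal_mul]
  simp only [Equiv.Perm.permMatrix, PEquiv.equiv_toPEquiv_toMatrix, Matrix.one_apply]
  by_cases hq : Equiv.swap i j p = q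
  · simp only [hq, if_pos rfl]
    rcases eq_or_ne p i with rfl | hpi
    · rw [Equiv.swap_apply_left] at hq
      subst hq
      simp [hij, Ne.symm hij]
    · rcases eq_or_ne p j with rfl | hpj
      · rw [Equiv.swap_apply_right] at hq
        subst hq
        simp [hij, Ne.symm hij, ha]
      · rw [Equiv.swap_apply_of_ne_of_ne hpi hpj] at hq
        subst hq
        simp [hpi, hpj]
  · simp [hq]

lemma delta_mem_comm (i j : Fin m) (hij : i ≠ j) (a : ℝ) (ha : a ≠ 0)
    (U : GL (Fin m) ℝ)
    (hU : U.val = diagonal (fun k => if k = i then a else if k = j then a⁻¹ else 1)) :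
    U ∈ ⁅(⊤ : Subgroup (GL (Fin m) ℝ)), (⊤ : Subgroup (GL (Fin m) ℝ))⁆ := by
  have hX : IsUnit (diagonal (fun k => if k = i then a else 1)) := by
    rw [Matrix.isUnit_iff_isUnit_det, det_diagonal]
    simp [Finset.prod_ite_eq', isUnit_iff_ne_zero, ha]
  have hP : IsUnit ((Equiv.swap i j).permMatrix ℝ) := by
    rw [Matrix.isUnit_iff_isUnit_det, Matrix.det_permutation, Equiv.Perm.sign_swap hij]
    simp [isUnit_iff_ne_zero]
  set X : GL (Fin m) ℝ := hX.unit
  set P : GL (Fin m) ℝ := hP.unit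
  have hcomm : X * P = U * P * X := by
    apply Units.ext
    simp only [Units.val_mul, IsUnit.unit_spec, hU, X, P]
    rw [my_diag_mul_perm i j hij a ha]
  have hkey : ⁅X, P⁆ = U := by
    rw [commutatorElement_def, hcomm]
    group
  exact hkey ▸ Subgroup.commutator_mem_commutator (Subgroup.mem_top X) (Subgroup.mem_top P)

open Classical in
lemma diag_mem_comm : ∀ (s : ℕ) (d : Fin m → ℝ) (U : GL (Fin m) ℝ),
    (Finset.univ.filter (fun k => d k ≠ 1)).card ≤ s →
    U.val = diagonal d → (∏ k, d k) = 1 →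
    U ∈ ⁅(⊤ : Subgroup (GL (Fin m) ℝ)), (⊤ : Subgroup (GL (Fin m) ℝ))⁆ := by
  intro s
  induction s with
  | zero =>
    intro d U hcard hU hprod
    have hall : ∀ k, d k = 1 := by
      intro k
      by_contra hk
      have : k ∈ Finset.univ.filter (fun k => d k ≠ 1) := by simp [hk]
      have := Finset.card_pos.2 ⟨k, this⟩
      omega
    have : U = 1 := by
      apply Units.ext
      rw [hU, Units.val_one]
      have : d = fun _ => 1 := funext hall
      rw [this]
      exact Matrix.diagonal_one
    rw [this]
    exact Subgroup.one_mem _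
  | succ s ih =>
    intro d U hcard hU hprod
    by_cases hle : (Finset.univ.filter (fun k => d k ≠ 1)).card ≤ s
    · exact ih d U hle hU hprod
    -- there is i with d i ≠ 1
    have hne : (Finset.univ.filter (fun k => d k ≠ 1)).Nonempty := by
      rw [← Finset.card_pos]; omega
    obtain ⟨i, hi⟩ := hne
    have hdi : d i ≠ 1 := by simpa using hi
    -- all entries nonzero
    have hnz : ∀ k, d k ≠ 0 := by
      intro k hk
      have : (∏ k, d k) = 0 := Finset.prod_eq_zero (Finset.mem_univ k) hk
      rw [hprod] at this; norm_num at this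
    -- there is j ≠ i with d j ≠ 1
    have hj : ∃ j, j ≠ i ∧ d j ≠ 1 := by
      by_contra hcon
      push_neg at hcon
      have : (∏ k, d k) = d i := Finset.prod_eq_single i (fun b _ hb => hcon b hb) (by simp)
      rw [hprod] at this
      exact hdi this.symm
    obtain ⟨j, hji, hdj⟩ := hj
    set d' : Fin m → ℝ := fun k => if k = i then 1 else if k = j then d i * d j else d k with hd'
    have hfact : d = fun k =>
        ((if k = i then d i else if k = j then (d i)⁻¹ else 1) * d' k) := by
      funext k
      rcases eq_or_ne k i with rfl | hki
      · simp [hd', hji.symm]  -- careful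
      · rcases eq_or_ne k j with rfl | hkj
        · simp [hd', hki]
          rw [← mul_assoc, inv_mul_cancel₀ (hnz i), one_mul]
        · simp [hd', hki, hkj]
    -- product of d' is 1
    have hprod' : (∏ k, d' k) = 1 := by
      have h1 : ∏ k, d k = d i * (d j * ∏ k ∈ (Finset.univ.erase i).erase j, d k) := by
        rw [Finset.mul_prod_erase _ _ (Finset.mem_erase.2 ⟨hji, Finset.mem_univ j⟩),
          Finset.mul_prod_erase _ _ (Finset.mem_univ i)]
      have h2 : ∏ k, d' k = d' i * (d' j * ∏ k ∈ (Finset.univ.erase i).erase j, d' k) := by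
        rw [Finset.mul_prod_erase _ _ (Finset.mem_erase.2 ⟨hji, Finset.mem_univ j⟩),
          Finset.mul_prod_erase _ _ (Finset.mem_univ i)]
      have h3 : ∏ k ∈ (Finset.univ.erase i).erase j, d' k
          = ∏ k ∈ (Finset.univ.erase i).erase j, d k := by
        apply Finset.prod_congr rfl
        intro k hk
        simp only [Finset.mem_erase] at hk
        simp [hd', hk.1, hk.2.1]
      rw [h2, h3]
      simp only [hd', if_pos rfl, if_neg hji, if_pos rfl, if_true]
      rw [hprod] at h1
      field_simp
      linarith [h1]
    -- the unit for diagonal d'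
    have hu' : IsUnit (diagonal d') := by
      rw [Matrix.isUnit_iff_isUnit_det, det_diagonal, hprod']
      exact isUnit_one
    have hU' : hu'.unit ∈ ⁅(⊤ : Subgroup (GL (Fin m) ℝ)), (⊤ : Subgroup (GL (Fin m) ℝ))⁆ := by
      apply ih d' hu'.unit _ (IsUnit.unit_spec hu') hprod'
      -- cardinality bound
      have hsub : (Finset.univ.filter (fun k => d' k ≠ 1))
          ⊆ (Finset.univ.filter (fun k => d k ≠ 1)).erase i := by
        intro k hk
        simp only [Finset.mem_filter, Finset.mem_univ, true_and] at hk
        rcases eq_or_ne k i with rfl | hki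
        · simp [hd'] at hk
        · rcases eq_or_ne k j with rfl | hkj
          · exact Finset.mem_erase.2 ⟨hki, by simp [hdj]⟩
          · refine Finset.mem_erase.2 ⟨hki, by simp; simpa [hd', hki, hkj] using hk⟩
      have := Finset.card_le_card hsub
      have hc2 := Finset.card_erase_le (s := Finset.univ.filter (fun k => d k ≠ 1)) (a := i)
      have hmem := Finset.card_erase_of_mem hi
      omega
    -- the delta unit
    have hΔ : IsUnit (diagonal (fun k => if k = i then d i else if k = j then (d i)⁻¹ else 1)) := by
      rw [Matrix.isUnit_iff_isUnit_det, det_diagonal]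
      rw [isUnit_iff_ne_zero, Finset.prod_ne_zero_iff]
      intro k _
      split_ifs
      · exact hnz i
      · exact inv_ne_zero (hnz i)
      · norm_num
    have hΔmem := delta_mem_comm i j (Ne.symm hji) (d i) (hnz i) hΔ.unit (IsUnit.unit_spec hΔ)
    have hsplit : U = hΔ.unit * hu'.unit := by
      apply Units.ext
      rw [Units.val_mul, IsUnit.unit_spec, IsUnit.unit_spec, hU, diagonal_mul_diagonal]
      exact congrArg Matrix.diagonal hfact
    rw [hsplit]
    exact Subgroup.mul_mem _ hΔmem hU'

lemma transvec_list_mem_comm (L : List (TransvectionStruct (Fin m) ℝ)) :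
    ∃ u : GL (Fin m) ℝ, u ∈ ⁅(⊤ : Subgroup (GL (Fin m) ℝ)), (⊤ : Subgroup (GL (Fin m) ℝ))⁆ ∧
      u.val = (L.map TransvectionStruct.toMatrix).prod := by
  induction L with
  | nil => exact ⟨1, Subgroup.one_mem _, by simp⟩
  | cons t L ih =>
    obtain ⟨u, hu, huval⟩ := ih
    have hT : IsUnit t.toMatrix := by
      rw [Matrix.isUnit_iff_isUnit_det, TransvectionStruct.det]
      exact isUnit_one
    refine ⟨hT.unit * u, Subgroup.mul_mem _ (transvec_mem_comm t hT.unit hT.unit_spec) hu, ?_⟩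
    rw [Units.val_mul, hT.unit_spec, huval]
    simp

lemma det_one_mem_comm (U : GL (Fin m) ℝ) (hdet : U.val.det = 1) :
    U ∈ ⁅(⊤ : Subgroup (GL (Fin m) ℝ)), (⊤ : Subgroup (GL (Fin m) ℝ))⁆ := by
  obtain ⟨L, L', dv, hdecomp⟩ := Matrix.Pivot.exists_list_transvec_mul_diagonal_mul_list_transvec U.val
  obtain ⟨uL, huL, huLval⟩ := transvec_list_mem_comm L
  obtain ⟨uL', huL', huL'val⟩ := transvec_list_mem_comm L'
  have hdprod : (∏ k, dv k) = 1 := by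
    have := hdet
    rw [hdecomp] at this
    simpa [Matrix.det_mul, Matrix.det_diagonal] using this
  have hud : IsUnit (diagonal dv) := by
    rw [Matrix.isUnit_iff_isUnit_det, det_diagonal, hdprod]; exact isUnit_one
  have hudmem := diag_mem_comm (Finset.univ.filter (fun k => dv k ≠ 1)).card dv hud.unit
    le_rfl hud.unit_spec hdprod
  have : U = uL * hud.unit * uL' := by
    apply Units.ext
    rw [Units.val_mul, Units.val_mul, huLval, huL'val, hud.unit_spec, hdecomp]
  rw [this]
  exact Subgroup.mul_mem _ (Subgroup.mul_mem _ huL hudmem) huL'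
namespace AffProof

open Matrix Subgroup

variable {n : ℕ}

def eq1 (h : 1 + (n - 1) = n) : Fin 1 ⊕ Fin (n - 1) ≃ Fin n :=
  finSumFinEquiv.trans (finCongr h)

/-- block matrix multiplicative map -/
def ψ (h : 1 + (n - 1) = n) :
    (Matrix (Fin 1) (Fin 1) ℝ × Matrix (Fin (n - 1)) (Fin (n - 1)) ℝ) →*
      Matrix (Fin n) (Fin n) ℝ where
  toFun p := Matrix.reindex (eq1 h) (eq1 h) (Matrix.fromBlocks p.1 0 0 p.2)
  map_one' := by
    simp only [Prod.fst_one, Prod.snd_one, Matrix.fromBlocks_one, Matrix.reindex_apply]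
    exact Matrix.submatrix_one_equiv (eq1 h).symm
  map_mul' p q := by
    simp only [Prod.fst_mul, Prod.snd_mul, Matrix.reindex_apply]
    rw [Matrix.submatrix_mul_equiv _ _ _ (eq1 h).symm _, Matrix.fromBlocks_multiply]
    simp

noncomputable def blockGL (h : 1 + (n - 1) = n) :
    GL (Fin 1) ℝ × GL (Fin (n - 1)) ℝ →* GL (Fin n) ℝ :=
  (Units.map (ψ h)).comp (MulEquiv.prodUnits.symm).toMonoidHom

lemma blockGL_val (h : 1 + (n - 1) = n) (p : GL (Fin 1) ℝ × GL (Fin (n - 1)) ℝ) :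
    (blockGL h p).val =
      Matrix.reindex (eq1 h) (eq1 h) (Matrix.fromBlocks p.1.val 0 0 p.2.val) := by
  rfl

def i0 (h : 1 + (n - 1) = n) : Fin n := eq1 h (Sum.inl 0)

lemma coe_eq_zero_iff (h : 1 + (n - 1) = n) (i : Fin n) :
    ((i : ℕ) = 0) ↔ i = i0 h := by
  constructor
  · intro hi
    apply Fin.ext
    rw [hi]
    simp [i0, eq1]
  · rintro rfl
    simp [i0, eq1]

def vec (x : ℝ) : Fin n → ℝ := fun i => if (i : ℕ) = 0 then x else 0

lemma vec_eq (h : 1 + (n - 1) = n) (x : ℝ) :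
    vec x = fun i : Fin n => if i = i0 h then x else 0 := by
  funext i
  simp only [vec]
  by_cases hi : i = i0 h
  · rw [if_pos hi, if_pos ((coe_eq_zero_iff h i).2 hi)]
  · rw [if_neg hi, if_neg (fun hc => hi ((coe_eq_zero_iff h i).1 hc))]

lemma vec_add (x y : ℝ) : vec (n := n) (x + y) = vec x + vec y := by
  funext i
  simp only [vec, Pi.add_apply]
  split_ifs <;> simp

lemma vec_zero : vec (n := n) 0 = 0 := by
  funext i; simp [vec]

/-- scalar of a 1×1 invertible matrix -/
def sc (u : GL (Fin 1) ℝ) : ℝ := u.val 0 0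

lemma sc_mul (u w : GL (Fin 1) ℝ) : sc (u * w) = sc u * sc w := by
  simp [sc, Units.val_mul, Matrix.mul_apply]

lemma sc_one : sc 1 = 1 := by simp [sc]

lemma sc_ne_zero (u : GL (Fin 1) ℝ) : sc u ≠ 0 := by
  have : IsUnit u.val.det := (Matrix.isUnit_iff_isUnit_det u.val).1 u.isUnit
  rw [Matrix.det_fin_one] at this
  exact isUnit_iff_ne_zero.1 this

lemma sc_inv (u : GL (Fin 1) ℝ) : sc u⁻¹ = (sc u)⁻¹ := by
  have h1 : sc u * sc u⁻¹ = 1 := by rw [← sc_mul, mul_inv_cancel, sc_one]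
  exact (inv_eq_of_mul_eq_one_right h1).symm

lemma mat_one_by_one (M : Matrix (Fin 1) (Fin 1) ℝ) :
    M = Matrix.diagonal (fun _ => M 0 0) := by
  ext a b
  fin_cases a <;> fin_cases b <;> simp

/-- the standard elements of the subgroup 𝒜 -/
noncomputable def elem (h : 1 + (n - 1) = n) (x : ℝ)
    (p : GL (Fin 1) ℝ × GL (Fin (n - 1)) ℝ) : AffGL n :=
  ⟨Multiplicative.ofAdd (vec x), blockGL h p⟩

lemma elem_left (h : 1 + (n - 1) = n) (x : ℝ) (p) :
    (elem h x p).left = Multiplicative.ofAdd (vec x) := rfl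

lemma elem_right (h : 1 + (n - 1) = n) (x : ℝ) (p) :
    (elem h x p).right = blockGL h p := rfl

lemma blockGL_mulVec (h : 1 + (n - 1) = n) (p : GL (Fin 1) ℝ × GL (Fin (n - 1)) ℝ)
    (y : ℝ) : (blockGL h p).val *ᵥ vec y = vec (sc p.1 * y) := by
  funext i
  rw [blockGL_val]
  have hventry : ∀ j : Fin n, vec y j = if j = i0 h then y else 0 := by
    intro j; rw [vec_eq h]
  simp only [Matrix.mulVec, dotProduct]
  have : ∀ j : Fin n,
      (Matrix.reindex (eq1 h) (eq1 h) (Matrix.fromBlocks p.1.val 0 0 p.2.val)) i j * vec y j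
        = if j = i0 h
          then (Matrix.reindex (eq1 h) (eq1 h) (Matrix.fromBlocks p.1.val 0 0 p.2.val)) i (i0 h) * y
          else 0 := by
    intro j
    rw [hventry j]
    split_ifs with hj
    · rw [hj]
    · ring
  rw [Finset.sum_congr rfl (fun j _ => this j), Finset.sum_ite_eq' Finset.univ (i0 h)]
  simp only [Finset.mem_univ, if_true]
  have hentry : (Matrix.reindex (eq1 h) (eq1 h)
      (Matrix.fromBlocks p.1.val 0 0 p.2.val)) i (i0 h)
      = if i = i0 h then sc p.1 else 0 := by
    rw [Matrix.reindex_apply, Matrix.submatrix_apply]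
    have h0 : (eq1 h).symm (i0 h) = Sum.inl 0 := by simp [i0]
    rw [h0]
    rcases hs : (eq1 h).symm i with a | b
    · have : i = i0 h := by
        have := congrArg (eq1 h) hs
        simp only [Equiv.apply_symm_apply] at this
        rw [this, i0]
        congr
        exact Subsingleton.elim a 0
      rw [if_pos this, Matrix.fromBlocks_apply₁₁]
      have : a = 0 := Subsingleton.elim a 0
      rw [this]; rfl
    · have : i ≠ i0 h := by
        intro hc
        rw [hc] at hs
        rw [h0] at hs
        exact Sum.inl_ne_inr hs
      rw [if_neg this, Matrix.fromBlocks_apply₂₁]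
      rfl
  rw [hentry, vec_eq h]
  by_cases hi : i = i0 h
  · rw [if_pos hi]; simp [hi]
  · rw [if_neg hi]; simp [hi]

lemma elem_mul (h : 1 + (n - 1) = n) (x y : ℝ) (p q : GL (Fin 1) ℝ × GL (Fin (n - 1)) ℝ) :
    elem h x p * elem h y q = elem h (x + sc p.1 * y) (p * q) := by
  apply SemidirectProduct.ext
  · show (elem h x p).left * glAut n (elem h x p).right (elem h y q).left = _
    rw [elem_left, elem_left, elem_right, elem_left]
    show Multiplicative.ofAdd (vec x) *
        Multiplicative.ofAdd ((blockGL h p).val *ᵥ (Multiplicative.ofAdd (vec y)).toAdd) = _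
    rw [toAdd_ofAdd, blockGL_mulVec, ← ofAdd_add, vec_add]
  · show (elem h x p).right * (elem h y q).right = _
    rw [elem_right, elem_right, elem_right]
    exact ((blockGL h).map_mul p q).symm

lemma elem_one (h : 1 + (n - 1) = n) : elem h 0 1 = 1 := by
  apply SemidirectProduct.ext
  · rw [elem_left, vec_zero]
    rfl
  · rw [elem_right]
    rw [(blockGL h).map_one]
    rfl

lemma elem_inv (h : 1 + (n - 1) = n) (x : ℝ) (p : GL (Fin 1) ℝ × GL (Fin (n - 1)) ℝ) :
    (elem h x p)⁻¹ = elem h (-((sc p.1)⁻¹ * x)) p⁻¹ := by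
  apply inv_eq_of_mul_eq_one_right
  rw [elem_mul, mul_inv_cancel]
  have h2 : sc p.1 * -((sc p.1)⁻¹ * x) = -x := by
    have := sc_ne_zero p.1
    field_simp
  have : x + sc p.1 * -((sc p.1)⁻¹ * x) = 0 := by rw [h2]; ring
  rw [this, elem_one]

lemma prod_fst_inv (p : GL (Fin 1) ℝ × GL (Fin (n - 1)) ℝ) : (p⁻¹).1 = p.1⁻¹ := rfl

lemma comm_elem (h : 1 + (n - 1) = n) (x y : ℝ) (p q : GL (Fin 1) ℝ × GL (Fin (n - 1)) ℝ) :
    ⁅elem h x p, elem h y q⁆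
      = elem h (x + sc p.1 * y - sc q.1 * x - y) ⁅p, q⁆ := by
  set a := sc p.1 with ha
  set b := sc q.1 with hb
  have ha0 : a ≠ 0 := sc_ne_zero _
  have hb0 : b ≠ 0 := sc_ne_zero _
  rw [commutatorElement_def, elem_mul, elem_inv, elem_mul, elem_inv, elem_mul]
  rw [commutatorElement_def]
  congr 1
  · simp only [Prod.fst_mul, prod_fst_inv, sc_mul, sc_inv, ← ha, ← hb]
    field_simp
    ring
lemma mem_setA_iff (h : 1 + (n - 1) = n) (g : AffGL n) :
    g ∈ setA n h ↔ ∃ (x : ℝ) (p : GL (Fin 1) ℝ × GL (Fin (n - 1)) ℝ), g = elem h x p := by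
  constructor
  · rintro ⟨x₁, l, A, hl, hA, hleft, hright⟩
    have hu : IsUnit (Matrix.diagonal (fun _ : Fin 1 => l)) := by
      rw [Matrix.isUnit_iff_isUnit_det, Matrix.det_diagonal]
      simpa [isUnit_iff_ne_zero] using hl
    refine ⟨x₁, (hu.unit, hA.unit), ?_⟩
    apply SemidirectProduct.ext
    · rw [hleft, elem_left]; rfl
    · apply Units.ext
      rw [elem_right, blockGL_val, hright, hu.unit_spec, hA.unit_spec]
      rfl
  · rintro ⟨x, p, rfl⟩
    refine ⟨x, sc p.1, p.2.val, sc_ne_zero _, p.2.isUnit, ?_, ?_⟩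
    · rw [elem_left]; rfl
    · rw [elem_right, blockGL_val]
      rw [show (Matrix.diagonal fun _ : Fin 1 => sc p.1) = p.1.val from (mat_one_by_one p.1.val).symm]
      rfl

lemma mem_setD_iff (h : 1 + (n - 1) = n) (g : AffGL n) :
    g ∈ setD n h ↔ ∃ (x : ℝ) (v : GL (Fin (n - 1)) ℝ), v.val.det = 1 ∧ g = elem h x (1, v) := by
  constructor
  · rintro ⟨x₁, D, hD, hleft, hright⟩
    have hu : IsUnit D := by
      rw [Matrix.isUnit_iff_isUnit_det, hD]; exact isUnit_one
    refine ⟨x₁, hu.unit, by rw [hu.unit_spec]; exact hD, ?_⟩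
    apply SemidirectProduct.ext
    · rw [hleft, elem_left]; rfl
    · apply Units.ext
      rw [elem_right, blockGL_val, hright, hu.unit_spec]
      rfl
  · rintro ⟨x, v, hv, rfl⟩
    refine ⟨x, v.val, hv, ?_, ?_⟩
    · rw [elem_left]; rfl
    · rw [elem_right, blockGL_val]
      rfl

lemma gl1_comm (u w : GL (Fin 1) ℝ) : u * w = w * u := by
  apply Units.ext
  rw [Units.val_mul, Units.val_mul]
  ext a b
  rw [Matrix.mul_apply, Matrix.mul_apply]
  rw [Fin.sum_univ_one, Fin.sum_univ_one]
  have ha : a = 0 := Subsingleton.elim a 0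
  have hb : b = 0 := Subsingleton.elim b 0
  rw [ha, hb, mul_comm]

lemma det_comm_gl {k : Type*} [DecidableEq k] [Fintype k] (v z : GL k ℝ) :
    (⁅v, z⁆ : GL k ℝ).val.det = 1 := by
  have hv : IsUnit v.val.det := (Matrix.isUnit_iff_isUnit_det v.val).1 v.isUnit
  have hz : IsUnit z.val.det := (Matrix.isUnit_iff_isUnit_det z.val).1 z.isUnit
  rw [commutatorElement_def, Units.val_mul, Units.val_mul, Units.val_mul,
    Matrix.coe_units_inv, Matrix.coe_units_inv, Matrix.det_mul, Matrix.det_mul,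
    Matrix.det_mul, Matrix.det_nonsing_inv, Matrix.det_nonsing_inv]
  have hv0 : v.val.det ≠ 0 := isUnit_iff_ne_zero.1 hv
  have hz0 : z.val.det ≠ 0 := isUnit_iff_ne_zero.1 hz
  rw [Ring.inverse_eq_inv']
  field_simp

noncomputable def Agrp (h : 1 + (n - 1) = n) : Subgroup (AffGL n) where
  carrier := setA n h
  one_mem' := (mem_setA_iff h 1).2 ⟨0, 1, (elem_one h).symm⟩
  mul_mem' := by
    intro a b ha hb
    obtain ⟨x, p, rfl⟩ := (mem_setA_iff h a).1 ha
    obtain ⟨y, q, rfl⟩ := (mem_setA_iff h b).1 hb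
    exact (mem_setA_iff h _).2 ⟨_, _, elem_mul h x y p q⟩
  inv_mem' := by
    intro a ha
    obtain ⟨x, p, rfl⟩ := (mem_setA_iff h a).1 ha
    exact (mem_setA_iff h _).2 ⟨_, _, elem_inv h x p⟩

lemma mem_Agrp (h : 1 + (n - 1) = n) (g : AffGL n) : g ∈ Agrp h ↔ g ∈ setA n h := Iff.rfl

noncomputable def Dgrp (h : 1 + (n - 1) = n) : Subgroup (AffGL n) where
  carrier := setD n h
  one_mem' := (mem_setD_iff h 1).2 ⟨0, 1, by simp, (elem_one h).symm⟩
  mul_mem' := by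
    intro a b ha hb
    obtain ⟨x, v, hv, rfl⟩ := (mem_setD_iff h a).1 ha
    obtain ⟨y, z, hz, rfl⟩ := (mem_setD_iff h b).1 hb
    refine (mem_setD_iff h _).2 ⟨x + sc 1 * y, v * z, ?_, ?_⟩
    · rw [Units.val_mul, Matrix.det_mul, hv, hz, mul_one]
    · rw [elem_mul h x y (1, v) (1, z), Prod.mk_mul_mk, one_mul]
  inv_mem' := by
    intro a ha
    obtain ⟨x, v, hv, rfl⟩ := (mem_setD_iff h a).1 ha
    refine (mem_setD_iff h _).2 ⟨-((sc (1 : GL (Fin 1) ℝ))⁻¹ * x), v⁻¹, ?_, ?_⟩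
    · rw [Matrix.coe_units_inv, Matrix.det_nonsing_inv, hv, Ring.inverse_one]
    · rw [elem_inv h x (1, v)]
      congr 1
      try rw [Prod.inv_mk, inv_one]
  
lemma mem_Dgrp (h : 1 + (n - 1) = n) (g : AffGL n) : g ∈ Dgrp h ↔ g ∈ setD n h := Iff.rfl

lemma comm_le (h : 1 + (n - 1) = n) : ⁅Agrp h, Agrp h⁆ ≤ Dgrp h := by
  rw [Subgroup.commutator_le]
  intro g1 hg1 g2 hg2
  obtain ⟨x, p, rfl⟩ := (mem_setA_iff h g1).1 hg1
  obtain ⟨y, q, rfl⟩ := (mem_setA_iff h g2).1 hg2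
  rw [comm_elem]
  have hprod : ⁅p, q⁆ = (⁅p.1, q.1⁆, ⁅p.2, q.2⁆) := rfl
  have h1 : ⁅p.1, q.1⁆ = 1 := commutatorElement_eq_one_iff_mul_comm.2 (gl1_comm p.1 q.1)
  rw [hprod, h1]
  exact (mem_setD_iff h _).2 ⟨_, ⁅p.2, q.2⁆, det_comm_gl p.2 q.2, rfl⟩

noncomputable def jmap (h : 1 + (n - 1) = n) : GL (Fin (n - 1)) ℝ →* AffGL n where
  toFun v := elem h 0 (1, v)
  map_one' := elem_one h
  map_mul' v z := by
    rw [elem_mul h 0 0 (1, v) (1, z), sc_one, Prod.mk_mul_mk, one_mul]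
    norm_num

lemma le_comm (h : 1 + (n - 1) = n) : Dgrp h ≤ ⁅Agrp h, Agrp h⁆ := by
  intro g hg
  obtain ⟨x, v, hv, rfl⟩ := (mem_setD_iff h g).1 hg
  have hsplit : elem h x (1, v) = elem h x (1, 1) * elem h 0 (1, v) := by
    rw [elem_mul h x 0 (1, 1) (1, v), Prod.mk_mul_mk, one_mul, one_mul, sc_one]
    norm_num
  rw [hsplit]
  apply Subgroup.mul_mem
  · -- translation part
    have hu2 : IsUnit (Matrix.diagonal fun _ : Fin 1 => (2:ℝ)) := by
      rw [Matrix.isUnit_iff_isUnit_det, Matrix.det_diagonal]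
      norm_num
    have hsc2 : sc hu2.unit = 2 := by
      show hu2.unit.val 0 0 = 2
      rw [hu2.unit_spec]
      simp
    have hck := comm_elem h (-x) 0 (1, 1) (hu2.unit, 1)
    have hc1 : ⁅((1 : GL (Fin 1) ℝ), (1 : GL (Fin (n - 1)) ℝ)), (hu2.unit, (1 : GL (Fin (n - 1)) ℝ))⁆
        = 1 := by
      have : ((1 : GL (Fin 1) ℝ), (1 : GL (Fin (n - 1)) ℝ)) = (1 : GL (Fin 1) ℝ × GL (Fin (n - 1)) ℝ) := rfl
      rw [this, commutatorElement_one_left]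
    rw [hc1] at hck
    have harg : -x + sc ((1 : GL (Fin 1) ℝ), (1 : GL (Fin (n - 1)) ℝ)).1 * 0
        - sc ((hu2.unit, (1 : GL (Fin (n - 1)) ℝ))).1 * (-x) - 0 = x := by
      simp only [sc_one, hsc2]
      ring
    rw [harg] at hck
    have : elem h x (1, 1) = elem h x (1 : GL (Fin 1) ℝ × GL (Fin (n - 1)) ℝ) := rfl
    rw [this, ← hck]
    apply Subgroup.commutator_mem_commutator
    · exact (mem_Agrp h _).2 ((mem_setA_iff h _).2 ⟨-x, (1, 1), rfl⟩)
    · exact (mem_Agrp h _).2 ((mem_setA_iff h _).2 ⟨0, (hu2.unit, 1), rfl⟩)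
  · -- SL part
    have hv' : v ∈ ⁅(⊤ : Subgroup (GL (Fin (n - 1)) ℝ)), (⊤ : Subgroup (GL (Fin (n - 1)) ℝ))⁆ :=
      det_one_mem_comm v hv
    have hmem : jmap h v ∈ Subgroup.map (jmap h)
        ⁅(⊤ : Subgroup (GL (Fin (n - 1)) ℝ)), (⊤ : Subgroup (GL (Fin (n - 1)) ℝ))⁆ :=
      Subgroup.mem_map_of_mem _ hv'
    rw [Subgroup.map_commutator] at hmem
    have hrange : Subgroup.map (jmap h) ⊤ ≤ Agrp h := by
      rintro g ⟨w, -, rfl⟩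
      exact (mem_Agrp h _).2 ((mem_setA_iff h _).2 ⟨0, (1, w), rfl⟩)
    exact Subgroup.commutator_mono hrange hrange hmem

lemma main_lemma (h : 1 + (n - 1) = n) :
    ((⁅Subgroup.closure (setA n h), Subgroup.closure (setA n h)⁆ :
        Subgroup (AffGL n)) : Set (AffGL n)) = setD n h := by
  have hc : Subgroup.closure (setA n h) = Agrp h := Subgroup.closure_eq (Agrp h)
  rw [hc]
  have : ⁅Agrp h, Agrp h⁆ = Dgrp h := le_antisymm (comm_le h) (le_comm h)
  rw [this]
  rfl

end AffProof

/-- For odd n ≥ 3, the commutator subgroup of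
𝒜 = {((x₁,0,…,0), diag(l, A)) : l·det A ≠ 0} equals
𝒟 = {((x₁,0,…,0), diag(1, D)) : D ∈ SL(n-1,ℝ)}. -/
theorem commutator_setA (n : ℕ) (hn : 3 ≤ n) (hodd : Odd n) :
    ((⁅Subgroup.closure (setA n (by omega)), Subgroup.closure (setA n (by omega))⁆ :
        Subgroup (AffGL n)) : Set (AffGL n)) = setD n (by omega) :=
  AffProof.main_lemma (n := n) (by omega)
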